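/- Fix an integer n ≥ 2 and a real ε > 0 with n ≥ 1/ε. Let the item set be M = [n] × [n] (n² items), and let all n agents (with equal entitlements) share the common valuation v(S) = the number of indices g ∈ [n] such that S contains at least one item of the form (g, k). Then: (i) v is submodular; (ii) the maximin share of each agent, i.e. the maximum over partitions of M into n bundles of the minimum bundle value, is at least n; (iii) the allocation that gives agent i the bundle G_i = {(i, k) : k ∈ [n]} is a partition of all of M, is envy-free (each agent values every bundle G_j at exactly 1), and gives every agent value 1, which is at most ε times her maximin share. -/
import Mathlib


open Finset

/-- The common valuation: the value of a set `S` of items in `[n] × [n]` is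
the number of groups `g` such that `S` contains an item of the form `(g, k)`. -/
noncomputable def coverVal (n : ℕ) (S : Finset (Fin n × Fin n)) : ℝ :=
  ((Finset.univ.filter (fun g : Fin n => ∃ k, (g, k) ∈ S)).card : ℝ)

/-- The bundle `G i = {(i, k) : k ∈ [n]}` given to agent `i`. -/
def bundleG (n : ℕ) (i : Fin n) : Finset (Fin n × Fin n) :=
  Finset.univ.image (fun k => (i, k))

/-- (i) the valuation is submodular; (ii) the maximin share of
each agent is at least `n`; (iii) the allocation giving agent `i` the bundle
`G i` is a partition of all items, is envy-free (every bundle `G j` has value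
exactly `1` to every agent), and gives every agent value `1`, which is at most
`ε` times her maximin share. -/
lemma covSet_insert (n : ℕ) (S : Finset (Fin n × Fin n)) (e : Fin n × Fin n) :
    (Finset.univ.filter (fun g : Fin n => ∃ k, (g, k) ∈ insert e S)) =
    insert e.1 (Finset.univ.filter (fun g : Fin n => ∃ k, (g, k) ∈ S)) := by
  ext g
  simp only [Finset.mem_filter, Finset.mem_univ, true_and, Finset.mem_insert, Prod.ext_iff]
  constructor
  · rintro ⟨k, ⟨h1, h2⟩ | h⟩
    · exact Or.inl h1
    · exact Or.inr ⟨k, h⟩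
  · rintro (h | ⟨k, h⟩)
    · exact ⟨e.2, Or.inl ⟨h, rfl⟩⟩
    · exact ⟨k, Or.inr h⟩

lemma coverVal_le (n : ℕ) (S : Finset (Fin n × Fin n)) : coverVal n S ≤ n := by
  unfold coverVal
  exact_mod_cast (Finset.card_filter_le _ _).trans_eq (Finset.card_univ.trans (Fintype.card_fin n))

lemma coverVal_nonneg (n : ℕ) (S : Finset (Fin n × Fin n)) : 0 ≤ coverVal n S := by
  unfold coverVal; positivity

theorem stmt_3 (n : ℕ) (hn : 2 ≤ n) (ε : ℝ) (hε : 0 < ε) (hnε : (1 : ℝ) / ε ≤ n) :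
    -- (i) submodularity
    (∀ S T : Finset (Fin n × Fin n), ∀ e, S ⊆ T → e ∉ T →
      coverVal n (insert e T) - coverVal n T ≤ coverVal n (insert e S) - coverVal n S) ∧
    -- the maximin share: max over partitions into n bundles of the min bundle value
    (let MMS : ℝ := sSup {t : ℝ | ∃ B : Fin n → Finset (Fin n × Fin n),
        ((∀ i j, i ≠ j → Disjoint (B i) (B j)) ∧ (∀ e, ∃ i, e ∈ B i)) ∧
        t = ⨅ j, coverVal n (B j)};
      -- (ii) MMS ≥ n
      ((n : ℝ) ≤ MMS) ∧
      -- (iii) G is a partition of all of M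
      ((∀ i j, i ≠ j → Disjoint (bundleG n i) (bundleG n j)) ∧
        (∀ e, ∃ i, e ∈ bundleG n i)) ∧
      -- each agent values every bundle G j at exactly 1 (hence EF; each agent gets value 1)
      (∀ j, coverVal n (bundleG n j) = 1) ∧
      -- value 1 is at most ε times the maximin share
      ((1 : ℝ) ≤ ε * MMS)) := by
  have hnpos : (0:ℕ) < n := by omega
  haveI : Nonempty (Fin n) := ⟨⟨0, hnpos⟩⟩
  constructor
  · -- submodularity
    intro S T e hST heT
    unfold coverVal
    rw [covSet_insert, covSet_insert]
    set cS := (Finset.univ.filter (fun g : Fin n => ∃ k, (g, k) ∈ S)) with hcS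
    set cT := (Finset.univ.filter (fun g : Fin n => ∃ k, (g, k) ∈ T)) with hcT
    have hsub : cS ⊆ cT := by
      intro g hg
      simp only [hcS, hcT, Finset.mem_filter, Finset.mem_univ, true_and] at hg ⊢
      obtain ⟨k, hk⟩ := hg
      exact ⟨k, hST hk⟩
    by_cases hT : e.1 ∈ cT
    · rw [Finset.insert_eq_self.2 hT]
      have h1 : (cS.card : ℝ) ≤ ((insert e.1 cS).card : ℝ) := by
        exact_mod_cast Finset.card_le_card (Finset.subset_insert _ _)
      linarith
    · have hS : e.1 ∉ cS := fun h => hT (hsub h)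
      rw [Finset.card_insert_of_notMem hT, Finset.card_insert_of_notMem hS]
      push_cast
      linarith
  · intro MMS
    -- good partition B
    set B : Fin n → Finset (Fin n × Fin n) := fun i => Finset.univ.image (fun g : Fin n => (g, i)) with hB
    have hBval : ∀ i, coverVal n (B i) = n := by
      intro i
      unfold coverVal
      have : (Finset.univ.filter (fun g : Fin n => ∃ k, (g, k) ∈ B i)) = Finset.univ := by
        ext g
        simp only [Finset.mem_filter, Finset.mem_univ, true_and, iff_true]
        exact ⟨i, Finset.mem_image_of_mem _ (Finset.mem_univ g)⟩
      rw [this]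
      simp
    have hBpart : (∀ i j, i ≠ j → Disjoint (B i) (B j)) ∧ (∀ e, ∃ i, e ∈ B i) := by
      constructor
      · intro i j hij
        rw [Finset.disjoint_left]
        intro a hai haj
        simp only [hB, Finset.mem_image, Finset.mem_univ, true_and] at hai haj
        obtain ⟨g, hg⟩ := hai
        obtain ⟨g', hg'⟩ := haj
        apply hij
        rw [← hg] at hg'
        exact ((Prod.ext_iff.1 hg').2).symm
      · intro e
        exact ⟨e.2, by simp [hB]⟩
    have hBinf : (⨅ j, coverVal n (B j)) = n := by
      simp [hBval]
    have hmem : (n : ℝ) ∈ {t : ℝ | ∃ B : Fin n → Finset (Fin n × Fin n),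
        ((∀ i j, i ≠ j → Disjoint (B i) (B j)) ∧ (∀ e, ∃ i, e ∈ B i)) ∧
        t = ⨅ j, coverVal n (B j)} := ⟨B, hBpart, hBinf.symm⟩
    have hbdd : BddAbove {t : ℝ | ∃ B : Fin n → Finset (Fin n × Fin n),
        ((∀ i j, i ≠ j → Disjoint (B i) (B j)) ∧ (∀ e, ∃ i, e ∈ B i)) ∧
        t = ⨅ j, coverVal n (B j)} := by
      refine ⟨n, ?_⟩
      rintro t ⟨C, _, rfl⟩
      calc (⨅ j, coverVal n (C j)) ≤ coverVal n (C (Classical.arbitrary (Fin n))) :=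
            ciInf_le ⟨0, by rintro x ⟨j, rfl⟩; exact coverVal_nonneg n (C j)⟩ _
        _ ≤ n := coverVal_le n _
    have hMMS : (n : ℝ) ≤ MMS := le_csSup hbdd hmem
    refine ⟨hMMS, ?_, ?_, ?_⟩
    · constructor
      · intro i j hij
        rw [Finset.disjoint_left]
        intro a hai haj
        simp only [bundleG, Finset.mem_image, Finset.mem_univ, true_and] at hai haj
        obtain ⟨k, hk⟩ := hai
        obtain ⟨k', hk'⟩ := haj
        apply hij
        rw [← hk] at hk'
        exact ((Prod.ext_iff.1 hk').1).symm
      · intro e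
        exact ⟨e.1, by simp [bundleG]⟩
    · intro j
      unfold coverVal
      have : (Finset.univ.filter (fun g : Fin n => ∃ k, (g, k) ∈ bundleG n j)) = {j} := by
        ext g
        simp only [Finset.mem_filter, Finset.mem_univ, true_and, Finset.mem_singleton]
        constructor
        · rintro ⟨k, hk⟩
          simp only [bundleG, Finset.mem_image, Finset.mem_univ, true_and] at hk
          obtain ⟨k', hk'⟩ := hk
          exact ((Prod.ext_iff.1 hk').1).symm
        · rintro rfl
          exact ⟨Classical.arbitrary _, Finset.mem_image_of_mem _ (Finset.mem_univ _)⟩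
      rw [this]
      simp
    · have h1 : (1:ℝ) = ε * (1/ε) := by field_simp
      calc (1:ℝ) = ε * (1/ε) := h1
        _ ≤ ε * n := by apply mul_le_mul_of_nonneg_left hnε hε.le
        _ ≤ ε * MMS := by apply mul_le_mul_of_nonneg_left hMMS hε.le
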